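/- Assume f satisfies (f0)–(f4). Then f(t)·t ≥ p_*·F(t) for every real t ≠ 0. (Claim 4 in the proof of Lemma 2.3.) -/

import Mathlib

open Filter Set MeasureTheory

lemma key_pos (q : ℝ) (hq : 2 < q) (f F Ft : ℝ → ℝ) (hf0 : Continuous f)
    (hF : ∀ t : ℝ, F t = ∫ s in (0:ℝ)..t, f s)
    (hFt : ∀ t : ℝ, Ft t = f t * t - 2 * F t)
    (hlim : Tendsto (fun s : ℝ => F s / s ^ 2) (nhdsWithin 0 (Ioi 0)) (nhds 0))
    (t : ℝ) (ht : 0 < t)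
    (hmono : ∀ s : ℝ, 0 < s → s ≤ t → Ft s / s ^ q ≤ Ft t / t ^ q) :
    q * F t ≤ f t * t := by
  have hq2 : q - 2 ≠ 0 := by linarith
  set c : ℝ := Ft t / t ^ q with hc
  set φ : ℝ → ℝ := fun s => F s / s ^ 2 - c / (q - 2) * s ^ (q - 2) with hφ
  have hDF : ∀ s : ℝ, HasDerivAt F (f s) s := by
    intro s
    have h := intervalIntegral.integral_hasDerivAt_right (hf0.intervalIntegrable 0 s)
      (hf0.stronglyMeasurable.stronglyMeasurableAtFilter) hf0.continuousAt
    have : F = fun u => ∫ x in (0:ℝ)..u, f x := funext hF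
    rw [this]; exact h
  have hφd : ∀ s : ℝ, 0 < s → HasDerivAt φ (Ft s / s ^ 3 - c * s ^ (q - 3)) s := by
    intro s hs
    have h1 : HasDerivAt (fun u : ℝ => F u / u ^ 2)
        ((f s * s ^ 2 - F s * (2 * s ^ 1)) / (s ^ 2) ^ 2) s :=
      (hDF s).div (hasDerivAt_pow 2 s) (by positivity)
    have h2 : HasDerivAt (fun u : ℝ => c / (q - 2) * u ^ (q - 2))
        (c / (q - 2) * ((q - 2) * s ^ (q - 2 - 1))) s :=
      (Real.hasDerivAt_rpow_const (Or.inl hs.ne')).const_mul _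
    have h3 := h1.sub h2
    have e1 : (f s * s ^ 2 - F s * (2 * s ^ 1)) / (s ^ 2) ^ 2 = Ft s / s ^ 3 := by
      rw [hFt]; field_simp
    have e2 : c / (q - 2) * ((q - 2) * s ^ (q - 2 - 1)) = c * s ^ (q - 3) := by
      have : q - 2 - 1 = q - 3 := by ring
      rw [this]; field_simp
    rw [e1, e2] at h3; exact h3
  have hanti : AntitoneOn φ (Ioc 0 t) := by
    apply antitoneOn_of_deriv_nonpos (convex_Ioc 0 t)
    · exact fun s hs => ((hφd s hs.1).continuousAt).continuousWithinAt
    · rw [interior_Ioc]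
      exact fun s hs => ((hφd s hs.1).differentiableAt).differentiableWithinAt
    · rw [interior_Ioc]
      intro s hs
      rw [(hφd s hs.1).deriv]
      have hFs : Ft s ≤ c * s ^ q := by
        have h := hmono s hs.1 hs.2.le
        rwa [div_le_iff₀ (Real.rpow_pos_of_pos hs.1 q)] at h
      have hsq : s ^ q = s ^ (q - 3) * s ^ 3 := by
        rw [← Real.rpow_natCast s 3, ← Real.rpow_add hs.1]; norm_num
      have h3 : (0:ℝ) < s ^ 3 := pow_pos hs.1 3
      have : Ft s / s ^ 3 ≤ c * s ^ (q - 3) := by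
        rw [div_le_iff₀ h3]
        calc Ft s ≤ c * s ^ q := hFs
          _ = c * s ^ (q - 3) * s ^ 3 := by rw [hsq]; ring
      linarith
  have hφ0 : Tendsto φ (nhdsWithin 0 (Ioi 0)) (nhds 0) := by
    have t2 : Tendsto (fun s : ℝ => s ^ (q - 2)) (nhds (0:ℝ)) (nhds 0) := by
      have hc2 := Real.continuousAt_rpow_const 0 (q - 2) (Or.inr (by linarith))
      have := hc2.tendsto
      rwa [Real.zero_rpow hq2] at this
    have t3 : Tendsto (fun s : ℝ => c / (q - 2) * s ^ (q - 2)) (nhdsWithin 0 (Ioi 0)) (nhds 0) := by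
      have h4 : Tendsto (fun s : ℝ => c / (q - 2) * s ^ (q - 2)) (nhds 0) (nhds (c / (q-2) * 0)) :=
        t2.const_mul (c / (q - 2))
      rw [mul_zero] at h4
      exact h4.mono_left nhdsWithin_le_nhds
    have := hlim.sub t3
    simpa using this
  have hev : ∀ᶠ s in nhdsWithin (0:ℝ) (Ioi 0), φ t ≤ φ s := by
    filter_upwards [Ioc_mem_nhdsGT ht] with s hs
    exact hanti hs ⟨ht, le_refl t⟩ hs.2
  have hφt : φ t ≤ 0 := ge_of_tendsto hφ0 hev
  -- unfold
  have hrp : (0:ℝ) < t ^ (q - 2) := Real.rpow_pos_of_pos ht _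
  have htq : t ^ q = t ^ (q - 2) * t ^ 2 := by
    rw [← Real.rpow_natCast t 2, ← Real.rpow_add ht]; norm_num
  have hkey : c / (q - 2) * t ^ (q - 2) = Ft t / ((q - 2) * t ^ 2) := by
    rw [hc, htq]; field_simp
  have h1 : F t / t ^ 2 ≤ Ft t / ((q - 2) * t ^ 2) := by
    have := hφt
    rw [hφ] at this
    simp only at this
    linarith [hkey ▸ this]
  have ht2 : (0:ℝ) < t ^ 2 := by positivity
  have h2 : F t * ((q - 2) * t ^ 2) ≤ Ft t * t ^ 2 := by
    rw [div_le_div_iff₀ ht2 (mul_pos (by linarith) ht2)] at h1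
    linarith
  have h3 : (q - 2) * F t ≤ Ft t := by
    have := mul_le_mul_iff_of_pos_right ht2 |>.mp (by linarith [h2] : F t * (q - 2) * t ^ 2 ≤ Ft t * t ^ 2)
    linarith
  rw [hFt] at h3
  linarith


lemma Flim (q : ℝ) (hq : 2 < q) (f F : ℝ → ℝ) (hf0 : Continuous f)
    (hF : ∀ t : ℝ, F t = ∫ s in (0:ℝ)..t, f s)
    (hf1 : Tendsto (fun t : ℝ => f t / |t| ^ (q - 1)) (nhdsWithin 0 {0}ᶜ) (nhds 0)) :
    Tendsto (fun s : ℝ => F s / s ^ 2) (nhdsWithin 0 {0}ᶜ) (nhds 0) := by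
  have hq1 : (0:ℝ) < q - 1 := by linarith
  -- abs rpow tendsto at 0
  have habs : Tendsto (fun t : ℝ => |t| ^ (q - 1)) (nhds (0:ℝ)) (nhds 0) := by
    have hc := Real.continuousAt_rpow_const 0 (q - 1) (Or.inr hq1.le)
    have ha : Tendsto (fun t : ℝ => |t|) (nhds 0) (nhds 0) := by
      simpa using continuous_abs.tendsto (0:ℝ)
    have h := hc.tendsto.comp ha
    simpa [Function.comp_def, Real.zero_rpow hq1.ne'] using h
  -- f 0 = 0
  have hpt : Tendsto f (nhdsWithin 0 {0}ᶜ) (nhds 0) := by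
    have h := hf1.mul (habs.mono_left nhdsWithin_le_nhds)
    rw [mul_zero] at h
    refine h.congr' ?_
    filter_upwards [self_mem_nhdsWithin] with x hx
    have : |x| ^ (q - 1) ≠ 0 := (Real.rpow_pos_of_pos (abs_pos.mpr hx) _).ne'
    field_simp
  have hf00 : f 0 = 0 :=
    tendsto_nhds_unique ((hf0.tendsto 0).mono_left nhdsWithin_le_nhds) hpt
  -- eventual bound on f
  have h1 : ∀ᶠ x in nhdsWithin (0:ℝ) {0}ᶜ, |f x| ≤ |x| ^ (q - 1) := by
    have h := Metric.tendsto_nhds.mp hf1 1 one_pos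
    filter_upwards [h, self_mem_nhdsWithin] with x hx hx0
    rw [Real.dist_eq, sub_zero, abs_div] at hx
    have hp : (0:ℝ) < |x| ^ (q - 1) := Real.rpow_pos_of_pos (abs_pos.mpr hx0) _
    rw [abs_of_pos hp] at hx
    have := (div_lt_one hp).mp hx
    linarith
  obtain ⟨δ, hδ, hδ2⟩ := Metric.mem_nhdsWithin_iff.mp h1
  -- bound |F s| ≤ |s|^q for small s
  have hbF : ∀ᶠ s in nhdsWithin (0:ℝ) {0}ᶜ, ‖F s / s ^ 2‖ ≤ |s| ^ (q - 2) := by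
    have hball : ∀ᶠ s in nhdsWithin (0:ℝ) {0}ᶜ, dist s 0 < δ := by
      have h : ∀ᶠ s in nhds (0:ℝ), dist s 0 < δ := Metric.ball_mem_nhds 0 hδ
      exact h.filter_mono nhdsWithin_le_nhds
    filter_upwards [hball, self_mem_nhdsWithin] with s hsδ hs0
    have hs0' : s ≠ 0 := hs0
    have hsabs : (0:ℝ) < |s| := abs_pos.mpr hs0'
    rw [Real.dist_eq, sub_zero] at hsδ
    have hb : ∀ x ∈ Set.uIoc (0:ℝ) s, ‖f x‖ ≤ |s| ^ (q - 1) := by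
      intro x hx
      have hxs : |x| ≤ |s| := by
        rcases le_total 0 s with h | h
        · rw [Set.uIoc_of_le h] at hx
          rw [abs_of_pos hx.1, abs_of_nonneg h]; exact hx.2
        · rw [Set.uIoc_comm, Set.uIoc_of_le h] at hx
          rw [abs_of_nonpos (le_trans hx.2 le_rfl), abs_of_nonpos h]
          linarith [hx.1]
      rcases eq_or_ne x 0 with rfl | hx0
      · rw [Real.norm_eq_abs, hf00, abs_zero]
        positivity
      · have hfx := hδ2 ⟨by rw [Metric.mem_ball, Real.dist_eq, sub_zero]; exact lt_of_le_of_lt hxs hsδ, hx0⟩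
        rw [Real.norm_eq_abs]
        exact le_trans hfx (Real.rpow_le_rpow (abs_nonneg x) hxs hq1.le)
    have hInt := intervalIntegral.norm_integral_le_of_norm_le_const hb
    rw [sub_zero] at hInt
    have hFs : ‖F s‖ ≤ |s| ^ q := by
      rw [hF]
      calc ‖∫ x in (0:ℝ)..s, f x‖ ≤ |s| ^ (q - 1) * |s| := hInt
        _ = |s| ^ q := by
          rw [← Real.rpow_add_one hsabs.ne' (q - 1)]
          norm_num
    have hs2 : s ^ 2 = |s| ^ (2:ℕ) := (sq_abs s).symm
    rw [norm_div, Real.norm_eq_abs (s^2), hs2, abs_of_nonneg (by positivity)]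
    rw [div_le_iff₀ (by positivity)]
    calc ‖F s‖ ≤ |s| ^ q := hFs
      _ = |s| ^ (q - 2) * |s| ^ (2:ℕ) := by
        rw [← Real.rpow_natCast |s| 2, ← Real.rpow_add hsabs]; norm_num
  -- squeeze
  have hg : Tendsto (fun s : ℝ => |s| ^ (q - 2)) (nhdsWithin 0 {0}ᶜ) (nhds 0) := by
    have hc := Real.continuousAt_rpow_const 0 (q - 2) (Or.inr (by linarith))
    have ha : Tendsto (fun t : ℝ => |t|) (nhds 0) (nhds 0) := by
      simpa using continuous_abs.tendsto (0:ℝ)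
    have h := hc.tendsto.comp ha
    simp only [Function.comp, Real.zero_rpow (by linarith : q - 2 ≠ 0)] at h
    exact h.mono_left nhdsWithin_le_nhds
  exact squeeze_zero_norm' hbF hg

theorem stmt_4 (N : ℕ) (hN : 3 ≤ N) (p : ℝ) (hp2 : 2 ≤ p) (hpN : p < (N : ℝ))
    (f F Ft : ℝ → ℝ) (hf0 : Continuous f)
    (hF : ∀ t : ℝ, F t = ∫ s in (0:ℝ)..t, f s)
    (hFt : ∀ t : ℝ, Ft t = f t * t - 2 * F t)
    (hf1 : Tendsto (fun t : ℝ => f t / |t| ^ (p + 2 * p / (N : ℝ) - 1)) (nhdsWithin 0 {0}ᶜ) (nhds 0))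
    (hf2 : Tendsto (fun t : ℝ => f t / |t| ^ ((N : ℝ) * p / ((N : ℝ) - p) - 1)) (cocompact ℝ) (nhds 0))
    (hf3 : Tendsto (fun t : ℝ => F t / |t| ^ (p + 2 * p / (N : ℝ))) (cocompact ℝ) atTop)
    (hf4a : StrictAntiOn (fun t : ℝ => Ft t / |t| ^ (p + 2 * p / (N : ℝ))) (Iio 0))
    (hf4b : StrictMonoOn (fun t : ℝ => Ft t / |t| ^ (p + 2 * p / (N : ℝ))) (Ioi 0)) :
    ∀ t : ℝ, t ≠ 0 → f t * t ≥ (p + 2 * p / (N : ℝ)) * F t := by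
  have hN3 : (3:ℝ) ≤ (N:ℝ) := by exact_mod_cast hN
  have hq : 2 < p + 2 * p / (N : ℝ) := by
    have h1 : 0 < 2 * p / (N : ℝ) := by positivity
    linarith
  have hflim := Flim (p + 2 * p / (N : ℝ)) hq f F hf0 hF hf1
  intro t ht
  rcases ht.lt_or_gt with htn | htp
  · -- t < 0
    have hcont : Continuous (fun s : ℝ => -f (-s)) := (hf0.comp continuous_neg).neg
    have hF' : ∀ u : ℝ, F (-u) = ∫ s in (0:ℝ)..u, -f (-s) := by
      intro u
      rw [intervalIntegral.integral_neg, intervalIntegral.integral_comp_neg fun x => f x,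
        neg_zero, hF (-u)]
      rw [intervalIntegral.integral_symm]
    have hFt' : ∀ u : ℝ, Ft (-u) = (-f (-u)) * u - 2 * F (-u) := by
      intro u; rw [hFt (-u)]; ring
    have hlim' : Tendsto (fun s : ℝ => F (-s) / s ^ 2) (nhdsWithin 0 (Ioi 0)) (nhds 0) := by
      have hneg : Tendsto (fun s : ℝ => -s) (nhdsWithin (0:ℝ) (Ioi 0))
          (nhdsWithin (0:ℝ) {0}ᶜ) := by
        apply tendsto_nhdsWithin_of_tendsto_nhds_of_eventually_within
        · have : Tendsto (fun s : ℝ => -s) (nhds (0:ℝ)) (nhds (0:ℝ)) := by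
            simpa using (continuous_neg.tendsto (0:ℝ))
          exact this.mono_left nhdsWithin_le_nhds
        · filter_upwards [self_mem_nhdsWithin] with x hx
          exact neg_ne_zero.mpr (ne_of_gt hx)
      have h := hflim.comp hneg
      refine h.congr fun s => ?_
      simp [Function.comp, neg_sq]
    have hmono' : ∀ s : ℝ, 0 < s → s ≤ -t →
        Ft (-s) / s ^ (p + 2 * p / (N : ℝ)) ≤ Ft (-(-t)) / (-t) ^ (p + 2 * p / (N : ℝ)) := by
      intro s hs hst
      rw [neg_neg]
      rcases eq_or_lt_of_le hst with rfl | hlt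
      · rw [neg_neg]
      · have h := hf4a (mem_Iio.mpr htn) (mem_Iio.mpr (by linarith : -s < 0))
          (by linarith : t < -s)
        simp only at h
        rw [abs_of_neg (by linarith : -s < (0:ℝ)), abs_of_neg htn, neg_neg] at h
        exact h.le
    have hkey := key_pos (p + 2 * p / (N : ℝ)) hq (fun s => -f (-s)) (fun s => F (-s))
      (fun s => Ft (-s)) hcont hF' hFt' hlim' (-t) (by linarith) hmono'
    simp only [neg_neg] at hkey
    rw [neg_mul_neg] at hkey
    exact hkey
  · -- t > 0
    have hlim' : Tendsto (fun s : ℝ => F s / s ^ 2) (nhdsWithin 0 (Ioi 0)) (nhds 0) :=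
      hflim.mono_left (nhdsWithin_mono 0 fun x hx => ne_of_gt hx)
    have hmono : ∀ s : ℝ, 0 < s → s ≤ t →
        Ft s / s ^ (p + 2 * p / (N : ℝ)) ≤ Ft t / t ^ (p + 2 * p / (N : ℝ)) := by
      intro s hs hst
      rcases eq_or_lt_of_le hst with rfl | hlt
      · exact le_refl _
      · have h := hf4b (mem_Ioi.mpr hs) (mem_Ioi.mpr htp) hlt
        simp only at h
        rw [abs_of_pos hs, abs_of_pos htp] at h
        exact h.le
    exact key_pos (p + 2 * p / (N : ℝ)) hq f F Ft hf0 hF hFt hlim' t htp hmono
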